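/- For the Schubert derivation on ⋀^k M and any i ≥ 1, h ≥ 0: D_h(ε^i ∧ ε^{i+1} ∧ ⋯ ∧ ε^{i+k-2} ∧ ε^{i+k-1}) = ε^i ∧ ε^{i+1} ∧ ⋯ ∧ ε^{i+k-2} ∧ ε^{i+k-1+h}. -/

import Mathlib

open scoped Classical

noncomputable section

/-- The free ℤ-module `M = ⊕_{i ≥ 1} ℤ ε^i`; the basis vector `ε^i` (i ≥ 1) is
`Finsupp.single (i-1) 1`. -/
abbrev Mmod : Type := ℕ →₀ ℤ

def ee (i : ℕ) : Mmod := Finsupp.single (i - 1) 1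

/-- The exterior algebra `⋀ M` over ℤ. -/
abbrev EA : Type := ExteriorAlgebra ℤ Mmod

def eps (i : ℕ) : EA := ExteriorAlgebra.ι ℤ (ee i)

/-- `ε^{i₁} ∧ ⋯ ∧ ε^{i_k}`. -/
def wedge {k : ℕ} (i : Fin k → ℕ) : EA := (List.ofFn fun j => eps (i j)).prod

/-- `D` is the Schubert derivation on `⋀M`: `D₀ = id`, the generalized Leibniz rule
holds, and `D_i (ε^j) = ε^{i+j}` for `j ≥ 1`. -/
def IsSch (D : ℕ → Module.End ℤ EA) : Prop :=
  (∀ α, D 0 α = α) ∧ (∀ i, 1 ≤ i → D i (1 : EA) = 0) ∧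
  (∀ i (α β : EA), D i (α * β) = ∑ p ∈ Finset.HasAntidiagonal.antidiagonal i, D p.1 α * D p.2 β) ∧
  (∀ i j, 1 ≤ j → D i (eps j) = eps (i + j))

-- auxiliary
lemma eps_add_mul_swap (a b : ℕ) : eps a * eps b + eps b * eps a = 0 :=
  ExteriorAlgebra.ι_add_mul_swap _ _

lemma eps_anticomm (a b : ℕ) : eps a * eps b = -(eps b * eps a) := by
  exact eq_neg_of_add_eq_zero_left (eps_add_mul_swap a b)

lemma eps_sq (a : ℕ) : eps a * eps a = 0 := ExteriorAlgebra.ι_sq_zero _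

/-- plain product ε^i ⋯ ε^{i+k-1} -/
def RR : ℕ → ℕ → EA
  | _, 0 => 1
  | i, (k+1) => eps i * RR (i+1) k

/-- Q i k h = ε^i ⋯ ε^{i+k-1} ∧ ε^{i+k+h}, has k+1 factors. -/
def QQ : ℕ → ℕ → ℕ → EA
  | i, 0, h => eps (i + h)
  | i, (k+1), h => eps i * QQ (i+1) k h

lemma QQ_eq_RR (k i b : ℕ) : QQ i k b = RR i k * eps (i + k + b) := by
  induction k generalizing i with
  | zero => simp [QQ, RR]
  | succ k ih => simp [QQ, RR, ih (i+1), mul_assoc]; ring_nf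

lemma swapsum (m n : ℕ) :
    ∑ p ∈ Finset.HasAntidiagonal.antidiagonal m, eps (n + p.1) * eps (n + p.2) = 0 := by
  apply Finset.sum_involution (fun p _ => p.swap)
  · intro p _
    exact eps_add_mul_swap _ _
  · intro p _ hne hswap
    apply hne
    have h2 : p.2 = p.1 := by
      have := congrArg Prod.fst hswap; simpa using this
    rw [h2]; exact eps_sq _
  · intro p _; simp
  · intro p hp
    have := Finset.HasAntidiagonal.mem_antidiagonal.mp hp
    exact Finset.HasAntidiagonal.mem_antidiagonal.mpr (by simp [Prod.swap]; omega)

lemma pullR (k : ℕ) : ∀ i t : ℕ, eps t * RR i k = ((-1:ℤ)^k) • (RR i k * eps t) := by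
  induction k with
  | zero => intro i t; simp [RR]
  | succ k ih =>
    intro i t
    rw [RR, ← mul_assoc, eps_anticomm t i, neg_mul, mul_assoc, ih (i+1) t, mul_smul_comm,
      ← mul_assoc]
    rw [pow_succ, mul_comm ((-1:ℤ)^k), mul_smul, neg_one_zsmul]

lemma vanish (k : ℕ) : ∀ i b j : ℕ, j < k → eps (i + j) * QQ i k b = 0 := by
  induction k with
  | zero => intro i b j hj; omega
  | succ k ih =>
    intro i b j hj
    match j with
    | 0 =>
      rw [QQ, ← mul_assoc]
      simp [eps_sq]
    | (j+1) =>
      rw [QQ, ← mul_assoc, eps_anticomm _ i, neg_mul, mul_assoc]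
      have : i + (j + 1) = (i + 1) + j := by omega
      rw [this, ih (i+1) b j (by omega), mul_zero, neg_zero]

lemma mainQ (D : ℕ → Module.End ℤ EA) (hD : IsSch D) (k : ℕ) :
    ∀ i, 1 ≤ i → ∀ h, D h (QQ i k 0) = QQ i k h := by
  obtain ⟨h0, h1, hL, hE⟩ := hD
  induction k with
  | zero =>
    intro i hi h
    rw [QQ, QQ, Nat.add_zero, hE h i hi, Nat.add_comm]
  | succ k ih =>
    intro i hi h
    rw [QQ, hL]
    have e1 : ∀ p ∈ Finset.HasAntidiagonal.antidiagonal h,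
        D p.1 (eps i) * D p.2 (QQ (i+1) k 0) = eps (p.1 + i) * QQ (i+1) k p.2 := by
      intro p _
      rw [hE p.1 i hi, ih (i+1) (by omega) p.2]
    rw [Finset.sum_congr rfl e1,
      Finset.Nat.sum_antidiagonal_eq_sum_range_succ
        (fun a b => eps (a + i) * QQ (i+1) k b) h,
      Finset.sum_range_succ']
    have tail0 : (∑ a ∈ Finset.range h, eps (a + 1 + i) * QQ (i+1) k (h - (a + 1))) = 0 := by
      rcases le_or_gt h k with hh | hh
      · apply Finset.sum_eq_zero
        intro a ha
        have ha' : a < h := Finset.mem_range.mp ha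
        have : a + 1 + i = (i + 1) + a := by omega
        rw [this]
        exact vanish k (i+1) _ a (by omega)
      · have hk' : k ≤ h := by omega
        rw [← Finset.sum_range_add_sum_Ico _ hk']
        have first0 : (∑ a ∈ Finset.range k, eps (a + 1 + i) * QQ (i+1) k (h - (a + 1))) = 0 := by
          apply Finset.sum_eq_zero
          intro a ha
          have ha' : a < k := Finset.mem_range.mp ha
          have : a + 1 + i = (i + 1) + a := by omega
          rw [this]
          exact vanish k (i+1) _ a ha'
        rw [first0, zero_add, Finset.sum_Ico_eq_sum_range]
        set n := i + 1 + k with hn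
        set m := h - k - 1 with hm
        have e2 : ∀ c ∈ Finset.range (h - k),
            eps (k + c + 1 + i) * QQ (i+1) k (h - (k + c + 1)) =
            ((-1:ℤ)^k) • (RR (i+1) k * (eps (n + c) * eps (n + (m - c)))) := by
          intro c hc
          have hc' : c < h - k := Finset.mem_range.mp hc
          have e3 : k + c + 1 + i = n + c := by omega
          have e4 : h - (k + c + 1) = m - c := by omega
          rw [e3, e4, QQ_eq_RR, ← mul_assoc, pullR k (i+1) (n + c), smul_mul_assoc,
            mul_assoc]
        rw [Finset.sum_congr rfl e2, ← Finset.smul_sum, ← Finset.mul_sum]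
        have e6 : (∑ c ∈ Finset.range (h - k), eps (n + c) * eps (n + (m - c))) = 0 := by
          have sw := swapsum m n
          rw [Finset.Nat.sum_antidiagonal_eq_sum_range_succ
            (fun a b => eps (n + a) * eps (n + b)) m] at sw
          have hr : m + 1 = h - k := by omega
          rw [Nat.succ_eq_add_one, hr] at sw
          exact sw
        rw [e6, mul_zero, smul_zero]
    rw [tail0, zero_add]
    show eps (0 + i) * QQ (i+1) k (h - 0) = QQ i (k+1) h
    rw [Nat.zero_add, Nat.sub_zero, QQ]

lemma wedge_succ {k : ℕ} (f : Fin (k+1) → ℕ) :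
    wedge f = eps (f 0) * wedge (fun j : Fin k => f j.succ) := by
  simp [wedge, List.ofFn_succ]

lemma wedgeQ (k : ℕ) : ∀ i h : ℕ,
    wedge (fun j : Fin (k+1) => if (j : ℕ) = k then i + (j : ℕ) + h else i + (j : ℕ)) =
      QQ i k h := by
  induction k with
  | zero =>
    intro i h
    rw [wedge_succ]
    simp [wedge, QQ]
  | succ k ih =>
    intro i h
    rw [wedge_succ]
    have e0 : (if ((0 : Fin (k+2)) : ℕ) = k + 1 then i + ((0 : Fin (k+2)) : ℕ) + h
        else i + ((0 : Fin (k+2)) : ℕ)) = i := by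
      simp
    rw [e0]
    have e1 : (fun j : Fin (k+1) =>
        if ((j.succ : Fin (k+2)) : ℕ) = k + 1 then i + ((j.succ : Fin (k+2)) : ℕ) + h
        else i + ((j.succ : Fin (k+2)) : ℕ)) =
        (fun j : Fin (k+1) => if (j : ℕ) = k then (i+1) + (j : ℕ) + h else (i+1) + (j : ℕ)) := by
      funext j
      have hj : ((j.succ : Fin (k+2)) : ℕ) = (j : ℕ) + 1 := Fin.val_succ j
      rw [hj]
      by_cases hc : (j : ℕ) = k
      · simp [hc]; omega
      · have : ¬ ((j : ℕ) + 1 = k + 1) := by omega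
        simp [hc, this]; omega
    rw [e1, ih (i+1) h, QQ]

/-- `D_h(ε^i ∧ ε^{i+1} ∧ ⋯ ∧ ε^{i+k-1}) = ε^i ∧ ε^{i+1} ∧ ⋯ ∧ ε^{i+k-2} ∧
ε^{i+k-1+h}` (only the last index is raised, by `h`). -/
theorem schubert_derivative_of_consecutive_wedge
    (D : ℕ → Module.End ℤ EA) (hD : IsSch D)
    (k : ℕ) (hk : 1 ≤ k) (i : ℕ) (hi : 1 ≤ i) (h : ℕ) :
    D h (wedge (fun j : Fin k => i + (j : ℕ))) =
      wedge (fun j : Fin k => if (j : ℕ) = k - 1 then i + (j : ℕ) + h else i + (j : ℕ)) := by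
  obtain ⟨k', rfl⟩ : ∃ k', k = k' + 1 := ⟨k - 1, by omega⟩
  have lhs : wedge (fun j : Fin (k'+1) => i + (j : ℕ)) = QQ i k' 0 := by
    rw [← wedgeQ k' i 0]
    congr 1
    funext j
    split_ifs <;> omega
  have rhs : wedge (fun j : Fin (k'+1) =>
      if (j : ℕ) = (k' + 1) - 1 then i + (j : ℕ) + h else i + (j : ℕ)) = QQ i k' h := by
    simpa using wedgeQ k' i h
  rw [lhs, rhs, mainQ D hD k' i hi h]

end
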